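/- For any unit vectors x_1, …, x_N (N ≥ 3) in a real inner product space, Σ_{i=1}^{N−1} ⟨x_i, x_{i+1}⟩ − ⟨x_N, x_1⟩ ≤ N·cos(π/N). -/

import Mathlib

open RealInnerProductSpace

open Real Finset

lemma arccos_antitone : Antitone Real.arccos := by
  intro a b h
  unfold Real.arccos
  have := Real.monotone_arcsin h
  linarith

lemma jensen_cos (s : Finset ℕ) (hs : s.Nonempty) (θ : ℕ → ℝ)
    (h : ∀ i ∈ s, θ i ∈ Set.Icc 0 (π/2)) :
    ∑ i ∈ s, Real.cos (θ i) ≤ s.card * Real.cos ((∑ i ∈ s, θ i) / s.card) := by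
  have hc0 : (0:ℝ) < s.card := by
    exact_mod_cast Finset.card_pos.mpr hs
  have key := (strictConcaveOn_cos_Icc.concaveOn).le_map_sum
    (t := s) (w := fun _ => (s.card:ℝ)⁻¹) (p := θ)
    (fun i _ => by positivity)
    (by simp [Finset.sum_const]; field_simp)
    (fun i hi => by
      obtain ⟨h1, h2⟩ := h i hi
      constructor <;> [linarith [pi_pos]; exact h2])
  simp only [smul_eq_mul] at key
  rw [← Finset.mul_sum, ← Finset.mul_sum] at key
  rw [div_eq_inv_mul]
  calc ∑ i ∈ s, cos (θ i) = s.card * ((s.card:ℝ)⁻¹ * ∑ i ∈ s, cos (θ i)) := by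
        field_simp
    _ ≤ s.card * cos ((s.card:ℝ)⁻¹ * ∑ i ∈ s, θ i) := by
        apply mul_le_mul_of_nonneg_left key (le_of_lt hc0)

open RealInnerProductSpace in
lemma arccos_inner_triangle {E : Type*} [NormedAddCommGroup E] [InnerProductSpace ℝ E]
    {x y z : E} (hx : ‖x‖ = 1) (hy : ‖y‖ = 1) (hz : ‖z‖ = 1) :
    Real.arccos ⟪x, z⟫ ≤ Real.arccos ⟪x, y⟫ + Real.arccos ⟪y, z⟫ := by
  set c1 : ℝ := ⟪x, y⟫ with hc1
  set c2 : ℝ := ⟪y, z⟫ with hc2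
  have hxx : ⟪x, x⟫ = (1:ℝ) := by
    rw [real_inner_self_eq_norm_mul_norm, hx]; norm_num
  have hyy : ⟪y, y⟫ = (1:ℝ) := by
    rw [real_inner_self_eq_norm_mul_norm, hy]; norm_num
  have hzz : ⟪z, z⟫ = (1:ℝ) := by
    rw [real_inner_self_eq_norm_mul_norm, hz]; norm_num
  have b1 : |c1| ≤ 1 := by
    have := abs_real_inner_le_norm x y; rw [hx, hy] at this; simpa using this
  have b2 : |c2| ≤ 1 := by
    have := abs_real_inner_le_norm y z; rw [hy, hz] at this; simpa using this
  set a : ℝ := Real.arccos c1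
  set b : ℝ := Real.arccos c2
  rcases le_or_gt Real.pi (a + b) with hab | hab
  · exact le_trans (Real.arccos_le_pi _) hab
  · have hab0 : 0 ≤ a + b := by
      have := Real.arccos_nonneg c1; have := Real.arccos_nonneg c2; linarith
    set p : E := x - c1 • y
    set q : E := z - c2 • y
    have hpq : ⟪p, q⟫ = ⟪x, z⟫ - c1 * c2 := by
      simp only [p, q, inner_sub_left, inner_sub_right, real_inner_smul_left,
        real_inner_smul_right, hyy]
      have h2 : (inner ℝ y z : ℝ) = c2 := hc2.symm
      have h1 : (inner ℝ x y : ℝ) = c1 := hc1.symm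
      rw [h1, h2]; ring
    have hpp : ⟪p, p⟫ = 1 - c1 ^ 2 := by
      simp only [p, inner_sub_left, inner_sub_right, real_inner_smul_left,
        real_inner_smul_right, hyy, hxx]
      have h1 : (inner ℝ y x : ℝ) = c1 := (real_inner_comm x y).trans hc1.symm
      rw [h1]; ring
    have hqq : ⟪q, q⟫ = 1 - c2 ^ 2 := by
      simp only [q, inner_sub_left, inner_sub_right, real_inner_smul_left,
        real_inner_smul_right, hyy, hzz]
      have h2 : (inner ℝ z y : ℝ) = c2 := (real_inner_comm y z).trans hc2.symm
      rw [h2]; ring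
    have hnp : ‖p‖ = Real.sin a := by
      rw [Real.sin_arccos, ← hpp, real_inner_self_eq_norm_sq]
      rw [Real.sqrt_sq (norm_nonneg p)]
    have hnq : ‖q‖ = Real.sin b := by
      rw [Real.sin_arccos, ← hqq, real_inner_self_eq_norm_sq]
      rw [Real.sqrt_sq (norm_nonneg q)]
    have hCS : -(‖p‖ * ‖q‖) ≤ ⟪p, q⟫ := by
      have := abs_real_inner_le_norm p q
      have := neg_abs_le (⟪p, q⟫ : ℝ)
      linarith
    have hca : Real.cos a = c1 := Real.cos_arccos (by linarith [abs_le.mp b1]) (by linarith [abs_le.mp b1])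
    have hcb : Real.cos b = c2 := Real.cos_arccos (by linarith [abs_le.mp b2]) (by linarith [abs_le.mp b2])
    have key : Real.cos (a + b) ≤ ⟪x, z⟫ := by
      rw [Real.cos_add, hca, hcb]
      rw [hnp, hnq] at hCS
      rw [hpq] at hCS
      linarith
    calc Real.arccos ⟪x, z⟫ ≤ Real.arccos (Real.cos (a + b)) := arccos_antitone key
      _ = a + b := Real.arccos_cos hab0 (le_of_lt hab)

lemma key_angle (N : ℕ) (hN : 3 ≤ N) (θ : ℕ → ℝ)
    (h0 : ∀ i ∈ Finset.range N, 0 ≤ θ i) (h1 : ∀ i ∈ Finset.range N, θ i ≤ π)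
    (hsum : π ≤ ∑ i ∈ Finset.range N, θ i) :
    ∑ i ∈ Finset.range N, Real.cos (θ i) ≤ N * Real.cos (π / N) := by
  have hN0 : (0:ℝ) < N := by positivity
  have hNR : (3:ℝ) ≤ N := by exact_mod_cast hN
  have hNm2 : (N:ℝ) - 2 ≤ N * Real.cos (π / N) := by
    have hq := Real.one_sub_sq_div_two_le_cos (x := π / N)
    have hπ : π < 3.15 := Real.pi_lt_d2
    have hπ0 := Real.pi_pos
    have h1 : (π / N) ^ 2 ≤ (4:ℝ) / N := by
      rw [div_pow, div_le_div_iff₀ (by positivity) hN0]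
      have hsq : π ^ 2 ≤ 3.15 ^ 2 := by nlinarith
      calc π ^ 2 * N ≤ 3.15 ^ 2 * N := by nlinarith
        _ ≤ 4 * (N:ℝ)^2 := by nlinarith
    calc (N:ℝ) - 2 = N * (1 - ((4:ℝ)/N) / 2) := by field_simp; ring
      _ ≤ N * (1 - (π / N) ^ 2 / 2) := by
          apply mul_le_mul_of_nonneg_left _ (le_of_lt hN0)
          linarith
      _ ≤ N * Real.cos (π / N) := mul_le_mul_of_nonneg_left hq (le_of_lt hN0)
  -- the jensen-based bound, for tuples with values in [0, π/2]
  have jensen_case : ∀ θ' : ℕ → ℝ, (∀ i ∈ Finset.range N, θ' i ∈ Set.Icc 0 (π/2)) →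
      π ≤ ∑ i ∈ Finset.range N, θ' i →
      ∑ i ∈ Finset.range N, Real.cos (θ' i) ≤ N * Real.cos (π / N) := by
    intro θ' hmem hs
    have hne : (Finset.range N).Nonempty := by
      rw [Finset.nonempty_range_iff]; omega
    have hJ := jensen_cos (Finset.range N) hne θ' hmem
    rw [Finset.card_range] at hJ
    refine hJ.trans ?_
    apply mul_le_mul_of_nonneg_left _ (le_of_lt hN0)
    apply Real.cos_le_cos_of_nonneg_of_le_pi (by positivity)
    · -- (∑ θ')/N ≤ π
      have hub : ∑ i ∈ Finset.range N, θ' i ≤ N * (π/2) := by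
        calc ∑ i ∈ Finset.range N, θ' i ≤ ∑ i ∈ Finset.range N, (π/2) :=
              Finset.sum_le_sum (fun i hi => (hmem i hi).2)
          _ = N * (π/2) := by rw [Finset.sum_const, Finset.card_range]; ring
      rw [div_le_iff₀ hN0]
      have := Real.pi_pos
      nlinarith
    · gcongr
  set B := (Finset.range N).filter (fun i => π/2 < θ i) with hB
  by_cases hB2 : 2 ≤ B.card
  · -- at least two large angles: crude bound N - 2
    obtain ⟨j, hjB, k, hkB, hjk⟩ := Finset.one_lt_card.mp hB2
    obtain ⟨hjr, hjθ⟩ := Finset.mem_filter.mp hjB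
    obtain ⟨hkr, hkθ⟩ := Finset.mem_filter.mp hkB
    have hcj : Real.cos (θ j) ≤ 0 :=
      Real.cos_nonpos_of_pi_div_two_le_of_le (le_of_lt hjθ)
        (by have := h1 j hjr; have := Real.pi_pos; linarith)
    have hck : Real.cos (θ k) ≤ 0 :=
      Real.cos_nonpos_of_pi_div_two_le_of_le (le_of_lt hkθ)
        (by have := h1 k hkr; have := Real.pi_pos; linarith)
    have hksub : k ∈ (Finset.range N).erase j := Finset.mem_erase.mpr ⟨hjk.symm, hkr⟩
    have hsplit : ∑ i ∈ Finset.range N, Real.cos (θ i)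
        = (∑ i ∈ ((Finset.range N).erase j).erase k, Real.cos (θ i))
          + Real.cos (θ k) + Real.cos (θ j) := by
      rw [Finset.sum_erase_add _ _ hksub, Finset.sum_erase_add _ _ hjr]
    have hcard : (((Finset.range N).erase j).erase k).card = N - 2 := by
      rw [Finset.card_erase_of_mem hksub, Finset.card_erase_of_mem hjr, Finset.card_range]
      omega
    have hrest : ∑ i ∈ ((Finset.range N).erase j).erase k, Real.cos (θ i)
        ≤ (N:ℝ) - 2 := by
      calc ∑ i ∈ ((Finset.range N).erase j).erase k, Real.cos (θ i)
          ≤ (((Finset.range N).erase j).erase k).card • (1:ℝ) :=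
            Finset.sum_le_card_nsmul _ _ 1 (fun i _ => Real.cos_le_one _)
        _ = ((N - 2 : ℕ) : ℝ) := by rw [hcard, nsmul_eq_mul, mul_one]
        _ = (N:ℝ) - 2 := by push_cast [Nat.cast_sub (by omega : 2 ≤ N)]; ring
    linarith [hsplit, hrest, hNm2]
  · by_cases hBe : B = ∅
    · -- all angles ≤ π/2
      apply jensen_case θ _ hsum
      intro i hi
      refine ⟨h0 i hi, ?_⟩
      by_contra hlt
      push_neg at hlt
      have : i ∈ B := Finset.mem_filter.mpr ⟨hi, hlt⟩
      simp [hBe] at this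
    · -- exactly one large angle j
      obtain ⟨j, hjB⟩ := Finset.nonempty_iff_ne_empty.mpr hBe
      obtain ⟨hjr, hjθ⟩ := Finset.mem_filter.mp hjB
      have hsmall : ∀ i ∈ Finset.range N, i ≠ j → θ i ≤ π/2 := by
        intro i hi hij
        by_contra hlt
        push_neg at hlt
        have hiB : i ∈ B := Finset.mem_filter.mpr ⟨hi, hlt⟩
        have : 2 ≤ B.card := Finset.one_lt_card.mpr ⟨i, hiB, j, hjB, hij⟩
        exact hB2 this
      by_cases hk : ∃ k ∈ Finset.range N, k ≠ j ∧ θ j + θ k ≤ π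
      · -- merge j and k at their midpoint, then Jensen
        obtain ⟨k, hkr, hkj, hjkpi⟩ := hk
        set m := (θ j + θ k) / 2 with hm
        have hm0 : 0 ≤ m := by
          have := h0 j hjr; have := h0 k hkr; rw [hm]; linarith
        have hm2 : m ≤ π/2 := by rw [hm]; linarith
        set θ' := Function.update (Function.update θ j m) k m with hθ'
        have hjk : j ≠ k := hkj.symm
        have hθ'j : θ' j = m := by
          rw [hθ', Function.update_of_ne hjk, Function.update_self]
        have hθ'k : θ' k = m := by rw [hθ', Function.update_self]
        have hθ'o : ∀ i, i ≠ j → i ≠ k → θ' i = θ i := by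
          intro i hij hik
          rw [hθ', Function.update_of_ne hik, Function.update_of_ne hij]
        have hjsub : j ∈ (Finset.range N).erase k := Finset.mem_erase.mpr ⟨hjk, hjr⟩
        have hrest_eq : ∀ f g : ℕ → ℝ, (∀ i, i ≠ j → i ≠ k → f i = g i) →
            ∑ i ∈ ((Finset.range N).erase k).erase j, f i
              = ∑ i ∈ ((Finset.range N).erase k).erase j, g i := by
          intro f g hfg
          apply Finset.sum_congr rfl
          intro i hi
          have hik : i ≠ k := Finset.mem_erase.mp (Finset.mem_erase.mp hi).2 |>.1
          have hij : i ≠ j := (Finset.mem_erase.mp hi).1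
          exact hfg i hij hik
        have split : ∀ f : ℕ → ℝ, ∑ i ∈ Finset.range N, f i
            = (∑ i ∈ ((Finset.range N).erase k).erase j, f i) + f j + f k := by
          intro f
          rw [Finset.sum_erase_add _ _ hjsub, Finset.sum_erase_add _ _ hkr]
        have hsum' : ∑ i ∈ Finset.range N, θ' i = ∑ i ∈ Finset.range N, θ i := by
          rw [split θ', split θ, hθ'j, hθ'k,
            hrest_eq θ' θ (fun i hij hik => hθ'o i hij hik), hm]
          ring
        have hcosle : ∑ i ∈ Finset.range N, Real.cos (θ i)
            ≤ ∑ i ∈ Finset.range N, Real.cos (θ' i) := by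
          rw [split (fun i => Real.cos (θ i)), split (fun i => Real.cos (θ' i)),
            hθ'j, hθ'k,
            hrest_eq (fun i => Real.cos (θ' i)) (fun i => Real.cos (θ i))
              (fun i hij hik => by show Real.cos (θ' i) = Real.cos (θ i); rw [hθ'o i hij hik])]
          have hid : Real.cos (θ j) + Real.cos (θ k)
              = 2 * Real.cos m * Real.cos ((θ j - θ k)/2) := by
            rw [hm]; exact Real.cos_add_cos _ _
          have hcm : 0 ≤ Real.cos m := Real.cos_nonneg_of_mem_Icc
            ⟨by have := Real.pi_pos; linarith, hm2⟩
          have : Real.cos (θ j) + Real.cos (θ k) ≤ 2 * Real.cos m := by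
            rw [hid]
            calc 2 * Real.cos m * Real.cos ((θ j - θ k)/2)
                ≤ 2 * Real.cos m * 1 :=
                  mul_le_mul_of_nonneg_left (Real.cos_le_one _) (by linarith)
              _ = 2 * Real.cos m := by ring
          linarith
        refine hcosle.trans (jensen_case θ' ?_ (by rw [hsum']; exact hsum))
        intro i hi
        by_cases hij : i = j
        · subst hij; rw [hθ'j]; exact ⟨hm0, hm2⟩
        · by_cases hik : i = k
          · subst hik; rw [hθ'k]; exact ⟨hm0, hm2⟩
          · rw [hθ'o i hij hik]
            exact ⟨h0 i hi, hsmall i hi hij⟩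
      · -- all other angles are > π - θ j
        push_neg at hk
        have hbound : ∀ i ∈ (Finset.range N).erase j, Real.cos (θ i) ≤ -Real.cos (θ j) := by
          intro i hi
          obtain ⟨hij, hir⟩ := Finset.mem_erase.mp hi
          have hbig : π < θ j + θ i := hk i hir hij
          have : Real.cos (θ i) ≤ Real.cos (π - θ j) := by
            apply Real.cos_le_cos_of_nonneg_of_le_pi
            · have := h1 j hjr; linarith
            · exact h1 i hir
            · linarith
          rwa [Real.cos_pi_sub] at this
        have hcard : ((Finset.range N).erase j).card = N - 1 := by
          rw [Finset.card_erase_of_mem hjr, Finset.card_range]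
        have hrest : ∑ i ∈ (Finset.range N).erase j, Real.cos (θ i)
            ≤ ((N:ℝ) - 1) * (-Real.cos (θ j)) := by
          calc ∑ i ∈ (Finset.range N).erase j, Real.cos (θ i)
              ≤ ((Finset.range N).erase j).card • (-Real.cos (θ j)) :=
                Finset.sum_le_card_nsmul _ _ _ hbound
            _ = ((N - 1 : ℕ):ℝ) * (-Real.cos (θ j)) := by rw [hcard, nsmul_eq_mul]
            _ = ((N:ℝ) - 1) * (-Real.cos (θ j)) := by
                rw [Nat.cast_sub (by omega : 1 ≤ N)]; norm_num
        have hsplit : ∑ i ∈ Finset.range N, Real.cos (θ i)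
            = (∑ i ∈ (Finset.range N).erase j, Real.cos (θ i)) + Real.cos (θ j) :=
          (Finset.sum_erase_add _ _ hjr).symm
        have hcj1 : -1 ≤ Real.cos (θ j) := Real.neg_one_le_cos _
        have : ∑ i ∈ Finset.range N, Real.cos (θ i) ≤ -((N:ℝ) - 2) * Real.cos (θ j) := by
          rw [hsplit]; nlinarith
        have h2 : -((N:ℝ) - 2) * Real.cos (θ j) ≤ (N:ℝ) - 2 := by nlinarith
        linarith

open RealInnerProductSpace in
lemma arccos_chain {E : Type*} [NormedAddCommGroup E] [InnerProductSpace ℝ E]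
    (x : ℕ → E) : ∀ n, (∀ i ≤ n, ‖x i‖ = 1) →
    Real.arccos ⟪x 0, x n⟫ ≤ ∑ i ∈ Finset.range n, Real.arccos ⟪x i, x (i+1)⟫ := by
  intro n
  induction n with
  | zero =>
    intro h
    have h0 : ‖x 0‖ = 1 := h 0 (le_refl 0)
    have : ⟪x 0, x 0⟫ = (1:ℝ) := by
      rw [real_inner_self_eq_norm_mul_norm, h0]; norm_num
    rw [this, Real.arccos_one, Finset.sum_range_zero]
  | succ n ih =>
    intro h
    have h' : ∀ i ≤ n, ‖x i‖ = 1 := fun i hi => h i (by omega)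
    calc Real.arccos ⟪x 0, x (n+1)⟫
        ≤ Real.arccos ⟪x 0, x n⟫ + Real.arccos ⟪x n, x (n+1)⟫ :=
          arccos_inner_triangle (h 0 (by omega)) (h n (by omega)) (h (n+1) (le_refl _))
      _ ≤ (∑ i ∈ Finset.range n, Real.arccos ⟪x i, x (i+1)⟫)
            + Real.arccos ⟪x n, x (n+1)⟫ := by linarith [ih h']
      _ = ∑ i ∈ Finset.range (n+1), Real.arccos ⟪x i, x (i+1)⟫ :=
          (Finset.sum_range_succ _ n).symm


theorem ncycle_vector_bound {E : Type*} [NormedAddCommGroup E] [InnerProductSpace ℝ E]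
    (N : ℕ) (hN : 3 ≤ N) (x : ℕ → E) (hx : ∀ i < N, ‖x i‖ = 1) :
    (∑ i ∈ Finset.range (N - 1), ⟪x i, x (i + 1)⟫) - ⟪x (N - 1), x 0⟫
      ≤ (N : ℝ) * Real.cos (Real.pi / N) := by
  set y : ℕ → E := fun i => if i < N then x i else -x 0 with hy
  have hyn : ∀ i ≤ N, ‖y i‖ = 1 := by
    intro i hi
    rw [hy]
    by_cases h : i < N
    · simp only [if_pos h]; exact hx i h
    · simp only [if_neg h, norm_neg]; exact hx 0 (by omega)
  have hy0 : y 0 = x 0 := by rw [hy]; simp only [if_pos (by omega : 0 < N)]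
  have hyN : y N = -x 0 := by rw [hy]; simp only [if_neg (lt_irrefl N)]
  have hx0 : ⟪x 0, x 0⟫ = (1:ℝ) := by
    rw [real_inner_self_eq_norm_mul_norm, hx 0 (by omega)]; norm_num
  have hinner : ⟪y 0, y N⟫ = (-1 : ℝ) := by
    rw [hy0, hyN, inner_neg_right, hx0]
  have hchain := arccos_chain y N hyn
  rw [hinner, Real.arccos_neg_one] at hchain
  set θ : ℕ → ℝ := fun i => Real.arccos ⟪y i, y (i+1)⟫ with hθ
  have hkey := key_angle N hN θ
    (fun i _ => Real.arccos_nonneg _) (fun i _ => Real.arccos_le_pi _) hchain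
  have hcosθ : ∀ i ∈ Finset.range N, Real.cos (θ i) = ⟪y i, y (i+1)⟫ := by
    intro i hi
    rw [Finset.mem_range] at hi
    have hb : |(⟪y i, y (i+1)⟫ : ℝ)| ≤ 1 := by
      have := abs_real_inner_le_norm (y i) (y (i+1))
      rw [hyn i (by omega), hyn (i+1) (by omega)] at this
      simpa using this
    exact Real.cos_arccos (by linarith [abs_le.mp hb]) (by linarith [abs_le.mp hb])
  rw [Finset.sum_congr rfl hcosθ] at hkey
  have hM : N = (N - 1) + 1 := by omega
  have hlast : ⟪y (N-1), y ((N-1)+1)⟫ = -⟪x (N-1), x 0⟫ := by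
    have h1 : y (N-1) = x (N-1) := by rw [hy]; simp only [if_pos (by omega : N-1 < N)]
    have h2 : (N-1)+1 = N := by omega
    rw [h1, h2, hyN, inner_neg_right]
  have hsum_eq : ∑ i ∈ Finset.range N, (⟪y i, y (i+1)⟫ : ℝ)
      = (∑ i ∈ Finset.range (N - 1), (⟪x i, x (i + 1)⟫ : ℝ)) - ⟪x (N - 1), x 0⟫ := by
    have heq : ∑ i ∈ Finset.range (N-1), (⟪y i, y (i+1)⟫ : ℝ)
        = ∑ i ∈ Finset.range (N-1), (⟪x i, x (i + 1)⟫ : ℝ) := by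
      apply Finset.sum_congr rfl
      intro i hi
      rw [Finset.mem_range] at hi
      have h1 : y i = x i := by rw [hy]; simp only [if_pos (by omega : i < N)]
      have h2 : y (i+1) = x (i+1) := by rw [hy]; simp only [if_pos (by omega : i+1 < N)]
      rw [h1, h2]
    conv_lhs => rw [hM]
    rw [Finset.sum_range_succ, hlast, heq]
    ring
  rw [hsum_eq] at hkey
  exact hkey
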